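/- Let F satisfy the tangential cone condition on B with constant 0 ≤ c_tc < 1 and ‖F'(x)‖ ≤ c_F for all x ∈ B with c_F > 0. Let p > 1, let j_p : X → X* be a selection of the duality mapping, j_q : X* → X an inverse duality selection with X* p*-smooth with constant G > 0, and let j_2 : Y → Y* be a selection of the duality mapping J_2^Y. Let x_n, z ∈ B with F(z) = y and R_n := F(x_n) − y ≠ 0. Put w := j_2(R_n), u* := w ∘ F'(x_n), α := ⟨u*, x_n⟩ − ‖R_n‖², ξ := c_tc‖R_n‖². Then: (i) ⟨u*, x_n⟩ − (α + ξ) = (1 − c_tc)‖R_n‖² > 0 (so x_n lies strictly above the stripe); (ii) ⟨u*, z⟩ ≤ α + ξ; and (iii) for t̃ := ((1 − c_tc)‖R_n‖²/(G‖u*‖^{p*}))^{p−1} and x̃ := j_q(j_p(x_n) − t̃·u*), the descent property D_p(x̃, z) ≤ D_p(x_n, z) − ((1 − c_tc)^p/(p·G^{p−1}·c_F^p))·‖R_n‖^p holds. -/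

import Mathlib

set_option maxHeartbeats 1000000


/-- The Bregman distance associated with a selection `jp` of the duality mapping
`J_p^X`. -/
noncomputable def bregmanDist {X : Type*} [NormedAddCommGroup X] [NormedSpace ℝ X]
    (p : ℝ) (jp : X → StrongDual ℝ X) (x x' : X) : ℝ :=
  (1 / p) * ‖x'‖ ^ p - (1 / p) * ‖x‖ ^ p - jp x (x' - x)

/-- Descent property of one SESOP step with the current gradient for exact data:
the iterate lies strictly above the stripe, the solution lies below its upper
bounding hyperplane, and projecting onto that hyperplane yields the descent
property in the Bregman distance. -/
theorem sesop_exact_data_descent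
    {X Y : Type*} [NormedAddCommGroup X] [NormedSpace ℝ X] [CompleteSpace X]
    [NormedAddCommGroup Y] [NormedSpace ℝ Y] [CompleteSpace Y]
    (F : X → Y) (F' : X → X →L[ℝ] Y) (x₀ : X) (ρ : ℝ)
    (hdiff : ∀ x ∈ Metric.ball x₀ ρ, HasFDerivAt F (F' x) x)
    (ctc : ℝ) (hctc0 : 0 ≤ ctc) (hctc1 : ctc < 1)
    (htcc : ∀ x ∈ Metric.ball x₀ ρ, ∀ x' ∈ Metric.ball x₀ ρ,
      ‖F x - F x' - F' x (x - x')‖ ≤ ctc * ‖F x - F x'‖)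
    (cF : ℝ) (hcF : 0 < cF) (hFbd : ∀ x ∈ Metric.ball x₀ ρ, ‖F' x‖ ≤ cF)
    (p q : ℝ) (hp : 1 < p) (hpq : 1 / p + 1 / q = 1)
    (jp : X → StrongDual ℝ X) (jq : StrongDual ℝ X → X)
    (hjp : ∀ v : X, jp v v = ‖v‖ ^ p ∧ ‖jp v‖ = ‖v‖ ^ (p - 1))
    (hinv1 : ∀ xs : StrongDual ℝ X, jp (jq xs) = xs)
    (hinv2 : ∀ x : X, jq (jp x) = x)
    (G : ℝ) (hG : 0 < G)
    (hsmooth : ∀ xs ys : StrongDual ℝ X,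
      (1 / q) * ‖xs - ys‖ ^ q ≤ (1 / q) * ‖xs‖ ^ q - ys (jq xs) + (G / q) * ‖ys‖ ^ q)
    (j2 : Y → StrongDual ℝ Y)
    (hj2 : ∀ v : Y, j2 v v = ‖v‖ ^ 2 ∧ ‖j2 v‖ = ‖v‖)
    (y : Y) (xn z : X) (hxn : xn ∈ Metric.ball x₀ ρ) (hz : z ∈ Metric.ball x₀ ρ)
    (hFz : F z = y) (hR : F xn - y ≠ 0)
    (w : StrongDual ℝ Y) (hw : w = j2 (F xn - y))
    (us : StrongDual ℝ X) (hus : us = w.comp (F' xn))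
    (α ξ : ℝ) (hα : α = us xn - ‖F xn - y‖ ^ 2) (hξ : ξ = ctc * ‖F xn - y‖ ^ 2)
    (t : ℝ) (ht : t = ((1 - ctc) * ‖F xn - y‖ ^ 2 / (G * ‖us‖ ^ q)) ^ (p - 1))
    (x' : X) (hx' : x' = jq (jp xn - t • us)) :
    (us xn - (α + ξ) = (1 - ctc) * ‖F xn - y‖ ^ 2 ∧ 0 < us xn - (α + ξ)) ∧
    us z ≤ α + ξ ∧
    bregmanDist p jp x' z ≤
      bregmanDist p jp xn z -
        ((1 - ctc) ^ p / (p * G ^ (p - 1) * cF ^ p)) * ‖F xn - y‖ ^ p := by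
  have hp0 : (0:ℝ) < p := by linarith
  have h1q : 0 < 1/q := by
    have : 1/p < 1 := (div_lt_one hp0).mpr hp
    linarith
  have hq0 : 0 < q := one_div_pos.mp h1q
  have hqp : (p - 1) * q = p := by
    have hpne : p ≠ 0 := hp0.ne'
    have hqne : q ≠ 0 := hq0.ne'
    field_simp at hpq
    linear_combination -hpq
  set r : ℝ := ‖F xn - y‖ with hrdef
  have hr : 0 < r := norm_pos_iff.mpr hR
  have hw2 : w (F xn - y) = r ^ 2 := by rw [hw]; exact (hj2 _).1
  have hwn : ‖w‖ = r := by rw [hw]; exact (hj2 _).2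
  have husxn : ∀ v : X, us v = w (F' xn v) := by intro v; rw [hus]; rfl
  have hkey : us xn - us z = r ^ 2 - w (F xn - y - F' xn (xn - z)) := by
    have h1 : us xn - us z = w (F xn - y) - w (F xn - y - F' xn (xn - z)) := by
      rw [husxn, husxn, ← map_sub w, ← map_sub w]
      congr 1
      rw [← map_sub (F' xn)]
      abel
    rw [h1, hw2]
  have herr : ‖F xn - y - F' xn (xn - z)‖ ≤ ctc * r := by
    have h := htcc xn hxn z hz
    rw [hFz] at h
    exact h
  have habs : |w (F xn - y - F' xn (xn - z))| ≤ ctc * r ^ 2 := by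
    have h1 : ‖w (F xn - y - F' xn (xn - z))‖ ≤ ‖w‖ * ‖F xn - y - F' xn (xn - z)‖ :=
      w.le_opNorm _
    rw [Real.norm_eq_abs, hwn] at h1
    nlinarith [herr, hr.le, norm_nonneg (F xn - y - F' xn (xn - z))]
  have hlb : (1 - ctc) * r ^ 2 ≤ us xn - us z := by
    rw [hkey]
    have h := (abs_le.mp habs).2
    nlinarith
  have hrsq : 0 < (1 - ctc) * r ^ 2 := by
    have : 0 < r ^ 2 := by positivity
    nlinarith
  have hi1 : us xn - (α + ξ) = (1 - ctc) * r ^ 2 := by rw [hα, hξ]; ring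
  refine ⟨⟨hi1, by rw [hi1]; exact hrsq⟩, by rw [hα, hξ]; linarith, ?_⟩
  -- part (iii)
  have husne : us ≠ 0 := by
    intro h
    rw [h] at hlb
    simp only [ContinuousLinearMap.zero_apply, sub_zero, sub_self] at hlb
    nlinarith
  have hun : 0 < ‖us‖ := norm_pos_iff.mpr husne
  set S : ℝ := (1 - ctc) * r ^ 2 with hSdef
  have hS : 0 < S := hrsq
  set K : ℝ := G * ‖us‖ ^ q with hKdef
  have hK : 0 < K := mul_pos hG (Real.rpow_pos_of_pos hun q)
  have hSK : 0 < S / K := div_pos hS hK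
  have htpos : 0 < t := by rw [ht]; exact Real.rpow_pos_of_pos hSK _
  have hnormjp : ∀ v : X, ‖jp v‖ ^ q = ‖v‖ ^ p := by
    intro v
    rw [(hjp v).2, ← Real.rpow_mul (norm_nonneg v)]
    rw [hqp]
  have hbreg : ∀ v : X, bregmanDist p jp v z = 1/p * ‖z‖ ^ p + 1/q * ‖jp v‖ ^ q - jp v z := by
    intro v
    have h1 : (jp v) (z - v) = jp v z - ‖v‖ ^ p := by rw [map_sub, (hjp v).1]
    have h3 : (1:ℝ) - 1/p = 1/q := by linarith
    unfold bregmanDist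
    rw [h1, hnormjp v]
    linear_combination ‖v‖ ^ p * h3
  have hjpx' : jp x' = jp xn - t • us := by rw [hx', hinv1]
  have hsm := hsmooth (jp xn) (t • us)
  rw [hinv2 xn] at hsm
  simp only [ContinuousLinearMap.smul_apply, smul_eq_mul] at hsm
  have h2 : ‖t • us‖ ^ q = t ^ q * ‖us‖ ^ q := by
    rw [norm_smul, Real.norm_eq_abs, abs_of_pos htpos,
      Real.mul_rpow htpos.le (norm_nonneg _)]
  rw [h2] at hsm
  have hx'z : (jp xn - t • us) z = jp xn z - t * us z := by
    simp [ContinuousLinearMap.sub_apply]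
  have hdelta : bregmanDist p jp x' z ≤
      bregmanDist p jp xn z - t * (us xn - us z) + G/q * (t ^ q * ‖us‖ ^ q) := by
    rw [hbreg x', hbreg xn, hjpx', hx'z]
    linarith [hsm]
  have htS0 : t * S ≤ t * (us xn - us z) := mul_le_mul_of_nonneg_left hlb htpos.le
  have hGq : G/q * (t ^ q * ‖us‖ ^ q) = 1/q * (t ^ q * K) := by rw [hKdef]; ring
  have hdelta2 : bregmanDist p jp x' z ≤ bregmanDist p jp xn z - t * S + 1/q * (t ^ q * K) := by
    rw [← hGq]; linarith
  have htq : t ^ q = (S/K) ^ (p-1) * (S/K) := by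
    rw [ht, ← Real.rpow_mul hSK.le, hqp, ← Real.rpow_add_one hSK.ne' (p-1)]
    congr 1
    ring
  have htqK : t ^ q * K = t * S := by
    rw [htq, mul_assoc, div_mul_cancel₀ S hK.ne', ht]
  have htS : t * S = S ^ p / K ^ (p-1) := by
    rw [ht, Real.div_rpow hS.le hK.le, div_mul_eq_mul_div]
    congr 1
    rw [← Real.rpow_add_one hS.ne' (p-1)]
    ring_nf
  have hdelta3 : bregmanDist p jp x' z ≤
      bregmanDist p jp xn z - 1/p * (S ^ p / K ^ (p-1)) := by
    have heq : bregmanDist p jp xn z - t * S + 1/q * (t ^ q * K) =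
        bregmanDist p jp xn z - 1/p * (S ^ p / K ^ (p-1)) := by
      rw [htqK, ← htS]
      linear_combination t * S * hpq
    linarith [hdelta2]
  have husb : ‖us‖ ≤ cF * r := by
    rw [hus]
    calc ‖w.comp (F' xn)‖ ≤ ‖w‖ * ‖F' xn‖ := ContinuousLinearMap.opNorm_comp_le _ _
      _ ≤ r * cF := by rw [hwn]; exact mul_le_mul_of_nonneg_left (hFbd xn hxn) hr.le
      _ = cF * r := mul_comm _ _
  have hKp : K ^ (p-1) = G ^ (p-1) * ‖us‖ ^ p := by
    rw [hKdef, Real.mul_rpow hG.le (Real.rpow_nonneg (norm_nonneg us) q),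
      ← Real.rpow_mul (norm_nonneg us), show q * (p-1) = p by linear_combination hqp]
  have hSp : S ^ p = (1-ctc) ^ p * (r ^ p * r ^ p) := by
    rw [hSdef, show (1-ctc) * r ^ 2 = (1-ctc) * (r * r) by ring,
      Real.mul_rpow (by linarith) (by positivity), Real.mul_rpow hr.le hr.le]
  have hup : ‖us‖ ^ p ≤ cF ^ p * r ^ p := by
    calc ‖us‖ ^ p ≤ (cF * r) ^ p := Real.rpow_le_rpow (norm_nonneg us) husb hp0.le
      _ = cF ^ p * r ^ p := Real.mul_rpow hcF.le hr.le
  have hN : 0 < (1-ctc) ^ p := Real.rpow_pos_of_pos (by linarith) p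
  have hrp : 0 < r ^ p := Real.rpow_pos_of_pos hr p
  have hGp : 0 < G ^ (p-1) := Real.rpow_pos_of_pos hG _
  have hcp : 0 < cF ^ p := Real.rpow_pos_of_pos hcF p
  have hupos : 0 < ‖us‖ ^ p := Real.rpow_pos_of_pos hun p
  have hdivle : (1-ctc) ^ p * r ^ p / (G ^ (p-1) * cF ^ p) ≤
      (1-ctc) ^ p * (r ^ p * r ^ p) / (G ^ (p-1) * ‖us‖ ^ p) := by
    rw [div_le_div_iff₀ (by positivity) (by positivity)]
    have hmul := mul_le_mul_of_nonneg_left hup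
      (show (0:ℝ) ≤ (1-ctc) ^ p * r ^ p * G ^ (p-1) by positivity)
    calc (1-ctc) ^ p * r ^ p * (G ^ (p-1) * ‖us‖ ^ p)
        = (1-ctc) ^ p * r ^ p * G ^ (p-1) * ‖us‖ ^ p := by ring
      _ ≤ (1-ctc) ^ p * r ^ p * G ^ (p-1) * (cF ^ p * r ^ p) := hmul
      _ = (1-ctc) ^ p * (r ^ p * r ^ p) * (G ^ (p-1) * cF ^ p) := by ring
  have hfinal : (1-ctc) ^ p / (p * G ^ (p-1) * cF ^ p) * r ^ p ≤ 1/p * (S ^ p / K ^ (p-1)) := by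
    rw [hSp, hKp]
    calc (1-ctc) ^ p / (p * G ^ (p-1) * cF ^ p) * r ^ p
        = 1/p * ((1-ctc) ^ p * r ^ p / (G ^ (p-1) * cF ^ p)) := by
          field_simp
      _ ≤ 1/p * ((1-ctc) ^ p * (r ^ p * r ^ p) / (G ^ (p-1) * ‖us‖ ^ p)) :=
          mul_le_mul_of_nonneg_left hdivle (by positivity)
  linarith [hdelta3, hfinal]
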